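/- Let G be an abelian group, A, B finite nonempty subsets, and t₁, …, t_k group endomorphism parameters (here scalars in a field) such that |A + t_iB| ≤ K|A| for all i. Then |(t₁B + … + t_kB) − (t₁B + … + t_kB)| ≤ C_k K^{2k} |A| for a constant C_k depending only on k. -/

import Mathlib

set_option maxHeartbeats 1000000

open Finset Pointwise

private lemma sum_subset_nsmul {F : Type*} [Field F] [DecidableEq F] {ι : Type*} [DecidableEq ι]
    (s : Finset ι) (f : ι → Finset F) (D : Finset F) (h : ∀ i ∈ s, f i ⊆ D) :
    (∑ i ∈ s, f i) ⊆ s.card • D := by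
  induction s using Finset.induction_on with
  | empty => simp
  | insert _ _ hx ih =>
    rename_i a s'
    rw [Finset.sum_insert hx, Finset.card_insert_of_notMem hx, succ_nsmul']
    exact Finset.add_subset_add (h a (mem_insert_self a s'))
      (ih fun i hi => h i (mem_insert_of_mem hi))

theorem plunnecke_different_summands (k : ℕ) :
    ∃ C : ℝ, 0 < C ∧ ∀ (F : Type) (_ : Field F) (_ : DecidableEq F)
      (A B : Finset F) (t : Fin k → F) (K : ℝ),
      A.Nonempty → B.Nonempty →
      (∀ i, ((A + t i • B).card : ℝ) ≤ K * A.card) →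
      (((∑ i, t i • B) - (∑ i, t i • B)).card : ℝ) ≤ C * K ^ (2 * k) * A.card := by
  refine ⟨((k : ℝ) + 1) ^ (2 * k), by positivity, ?_⟩
  intro F _ _ A B t K hA hB hK
  have hA0 : (0 : ℝ) < A.card := by exact_mod_cast hA.card_pos
  rcases Nat.eq_zero_or_pos k with rfl | hk
  · -- k = 0 : the sum is {0}
    simp only [Finset.univ_eq_empty, Finset.sum_empty, Nat.mul_zero, pow_zero, one_mul]
    rw [show ((0 : Finset F) - 0) = 0 by simp]
    simpa using (by exact_mod_cast hA.card_pos : (1 : ℝ) ≤ A.card)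
  · -- k ≥ 1
    have hK1 : (1 : ℝ) ≤ K := by
      have i0 : Fin k := ⟨0, hk⟩
      have h1 : A.card ≤ (A + t i0 • B).card :=
        Finset.card_le_card_add_right (Finset.Nonempty.smul_finset (a := t i0) hB)
      have h1' : (A.card : ℝ) ≤ ((A + t i0 • B).card : ℝ) := by exact_mod_cast h1
      nlinarith [hK i0, h1']
    set D : Finset F := Finset.univ.biUnion (fun i : Fin k => t i • B) with hD
    -- the sum is inside k • D
    have hsub : (∑ i, t i • B) ⊆ k • D := by
      have := sum_subset_nsmul (Finset.univ : Finset (Fin k)) (fun i => t i • B) D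
        (fun i _ => Finset.subset_biUnion_of_mem (fun j : Fin k => t j • B) (Finset.mem_univ i))
      simpa using this
    -- card of A + D
    have hAD : ((A + D).card : ℝ) ≤ k * K * A.card := by
      have h1 : A + D ⊆ Finset.univ.biUnion (fun i : Fin k => A + t i • B) := by
        intro x hx
        rw [Finset.mem_add] at hx
        obtain ⟨a, ha, d, hd, rfl⟩ := hx
        rw [hD, Finset.mem_biUnion] at hd
        obtain ⟨i, _, hdi⟩ := hd
        exact Finset.mem_biUnion.2 ⟨i, Finset.mem_univ i, Finset.add_mem_add ha hdi⟩
      calc ((A + D).card : ℝ) ≤ ((Finset.univ.biUnion (fun i : Fin k => A + t i • B)).card : ℝ) := by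
            exact_mod_cast Finset.card_le_card h1
        _ ≤ ∑ i : Fin k, ((A + t i • B).card : ℝ) := by
            exact_mod_cast Finset.card_biUnion_le
        _ ≤ ∑ _i : Fin k, K * A.card := Finset.sum_le_sum fun i _ => hK i
        _ = k * K * A.card := by simp [mul_assoc]
    -- Plünnecke-Ruzsa
    have hPR := Finset.pluennecke_ruzsa_inequality_nsmul_sub_nsmul_add hA D k k
    have hPR' : ((k • D - k • D).card : ℝ) ≤ (((A + D).card : ℝ) / A.card) ^ (k + k) * A.card := by
      have := hPR
      have h2 : (((k • D - k • D).card : ℚ≥0) : ℝ) ≤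
          (((((A + D).card : ℚ≥0) / (A.card : ℚ≥0)) ^ (k + k) * (A.card : ℚ≥0) : ℚ≥0) : ℝ) := by
        exact_mod_cast this
      push_cast at h2
      convert h2 using 3
    have hdiv : (((A + D).card : ℝ) / A.card) ≤ k * K := by
      rw [div_le_iff₀ hA0]
      exact hAD
    have hpow : ((((A + D).card : ℝ)) / A.card) ^ (k + k) ≤ (k * K) ^ (2 * k) := by
      rw [two_mul]
      exact pow_le_pow_left₀ (by positivity) hdiv _
    have hSS : ((∑ i, t i • B) - (∑ i, t i • B)).card ≤ (k • D - k • D).card :=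
      Finset.card_le_card (Finset.sub_subset_sub hsub hsub)
    calc (((∑ i, t i • B) - (∑ i, t i • B)).card : ℝ)
        ≤ ((k • D - k • D).card : ℝ) := by exact_mod_cast hSS
      _ ≤ (((A + D).card : ℝ) / A.card) ^ (k + k) * A.card := hPR'
      _ ≤ (k * K) ^ (2 * k) * A.card := by
          have := mul_le_mul_of_nonneg_right hpow hA0.le
          exact this
      _ ≤ ((k : ℝ) + 1) ^ (2 * k) * K ^ (2 * k) * A.card := by
          rw [mul_pow]
          have h3 : (k : ℝ) ^ (2 * k) ≤ ((k : ℝ) + 1) ^ (2 * k) :=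
            pow_le_pow_left₀ (by positivity) (by linarith) _
          exact mul_le_mul_of_nonneg_right (mul_le_mul_of_nonneg_right h3
            (pow_nonneg (by linarith : (0:ℝ) ≤ K) _)) hA0.le
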